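/- Let Φ = f + r on a compact convex set S ⊆ R^n where f is differentiable satisfying the Hölder condition f(y) ≤ f(x) + ∇f(x)^T(y-x) + (ρ/2)‖y-x‖_p^p on S for some p > 1 and ρ > 0, and r is convex. Consider the generalized conditional gradient iteration x^{k+1} = (1-α_k)x^k + α_k y^k, where y^k minimizes ℓ(y;x^k) = f(x^k) + ∇f(x^k)^T(y - x^k) + r(y) over S and α_k minimizes α∇f(x^k)^T d^k + α^p (ρ/2)‖d^k‖_p^p + (1-α)r(x^k) + α r(y^k) over α ∈ [0,1] with d^k = y^k - x^k. Then for any ε with 0 < ε < diam_p(S)^p ρ, denoting Δℓ^k = -∇f(x^k)^T(y^k - x^k) + r(x^k) - r(y^k), one has Δℓ^k ≤ (ε/(D^p ρ))^{-1/(p-1)} (Φ(x^k) - Φ(x^{k+1})) + ε/2, where D = diam_p(S). -/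

import Mathlib

theorem stmt_6 (n : ℕ) (f r : EuclideanSpace ℝ (Fin n) → ℝ)
    (g : EuclideanSpace ℝ (Fin n) → EuclideanSpace ℝ (Fin n))
    (S : Set (EuclideanSpace ℝ (Fin n)))
    (p ρ ε D : ℝ) (x y x' : EuclideanSpace ℝ (Fin n)) (α : ℝ)
    (hS : Convex ℝ S) (hScomp : IsCompact S)
    (hr : ConvexOn ℝ Set.univ r)
    (hgrad : ∀ u, HasGradientAt f (g u) u)
    (hp : 1 < p) (hρ : 0 < ρ)
    (hHolder : ∀ u ∈ S, ∀ v ∈ S,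
      f v ≤ f u + (inner ℝ (g u) (v - u) : ℝ) + ρ / 2 * ∑ i, |(v - u) i| ^ p)
    (hD : D = sSup ((fun q : EuclideanSpace ℝ (Fin n) × EuclideanSpace ℝ (Fin n) =>
      (∑ i, |q.1 i - q.2 i| ^ p) ^ (1 / p)) '' (S ×ˢ S)))
    (hε : 0 < ε) (hεD : ε < D ^ p * ρ)
    (hx : x ∈ S) (hy : y ∈ S)
    (hymin : ∀ u ∈ S,
      f x + (inner ℝ (g x) (y - x) : ℝ) + r y ≤ f x + (inner ℝ (g x) (u - x) : ℝ) + r u)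
    (hα : α ∈ Set.Icc (0 : ℝ) 1)
    (hαmin : ∀ t ∈ Set.Icc (0 : ℝ) 1,
      α * (inner ℝ (g x) (y - x) : ℝ) + α ^ p * (ρ / 2) * ∑ i, |(y - x) i| ^ p
          + (1 - α) * r x + α * r y ≤
        t * (inner ℝ (g x) (y - x) : ℝ) + t ^ p * (ρ / 2) * ∑ i, |(y - x) i| ^ p
          + (1 - t) * r x + t * r y)
    (hx' : x' = (1 - α) • x + α • y) :
    -(inner ℝ (g x) (y - x) : ℝ) + r x - r y ≤
      (ε / (D ^ p * ρ)) ^ (-(1 / (p - 1))) * ((f x + r x) - (f x' + r x')) + ε / 2 := by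
  have hp0 : (0:ℝ) < p := by linarith
  have hp1 : p - 1 ≠ 0 := by intro h; linarith [h]
  set I : ℝ := (inner ℝ (g x) (y - x) : ℝ) with hI
  set N : ℝ := ∑ i, |(y - x) i| ^ p with hN
  have hNnonneg : 0 ≤ N :=
    Finset.sum_nonneg fun i _ => Real.rpow_nonneg (abs_nonneg _) p
  -- continuity of the diameter function
  have hcont : Continuous (fun q : EuclideanSpace ℝ (Fin n) × EuclideanSpace ℝ (Fin n) =>
      (∑ i, |q.1 i - q.2 i| ^ p) ^ (1 / p)) := by
    apply Continuous.rpow_const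
    · apply continuous_finset_sum
      intro i _
      apply Continuous.rpow_const
      · fun_prop
      · intro _; exact Or.inr hp0.le
    · intro _; exact Or.inr (by positivity)
  have hBdd : BddAbove ((fun q : EuclideanSpace ℝ (Fin n) × EuclideanSpace ℝ (Fin n) =>
      (∑ i, |q.1 i - q.2 i| ^ p) ^ (1 / p)) '' (S ×ˢ S)) :=
    ((hScomp.prod hScomp).image hcont).bddAbove
  have hDge : N ^ (1 / p) ≤ D := by
    rw [hD]
    refine le_csSup hBdd ⟨(y, x), ⟨hy, hx⟩, ?_⟩
    simp only [hN, PiLp.sub_apply]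
  have hDnonneg : 0 ≤ D := le_trans (Real.rpow_nonneg hNnonneg _) hDge
  have hDpos : 0 < D := by
    rcases hDnonneg.lt_or_eq with h | h
    · exact h
    · exfalso
      rw [← h, Real.zero_rpow (ne_of_gt hp0)] at hεD
      linarith
  have hDp_pos : 0 < D ^ p := Real.rpow_pos_of_pos hDpos p
  have hNle : N ≤ D ^ p := by
    have h1 : (N ^ (1 / p)) ^ p = N := by
      rw [← Real.rpow_mul hNnonneg, one_div, inv_mul_cancel₀ (ne_of_gt hp0), Real.rpow_one]
    exact h1 ▸ Real.rpow_le_rpow (Real.rpow_nonneg hNnonneg _) hDge hp0.le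
  -- build t
  set b : ℝ := ε / (D ^ p * ρ) with hb
  have hbpos : 0 < b := div_pos hε (mul_pos hDp_pos hρ)
  have hble1 : b ≤ 1 := (div_le_one (mul_pos hDp_pos hρ)).2 hεD.le
  set t : ℝ := b ^ (1 / (p - 1)) with ht
  have ht0 : 0 < t := Real.rpow_pos_of_pos hbpos _
  have ht1 : t ≤ 1 := Real.rpow_le_one hbpos.le hble1 (div_nonneg zero_le_one (by linarith))
  have htp : t ^ p = t * b := by
    have h2 : t ^ (p - 1) = b := by
      rw [ht, ← Real.rpow_mul hbpos.le]
      rw [one_div, inv_mul_cancel₀ hp1, Real.rpow_one]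
    calc t ^ p = t ^ (1 + (p - 1)) := by ring_nf
    _ = t ^ (1:ℝ) * t ^ (p - 1) := Real.rpow_add ht0 _ _
    _ = t * b := by rw [Real.rpow_one, h2]
  -- x' ∈ S
  have hα0 := hα.1
  have hα1 := hα.2
  have hx'S : x' ∈ S := by
    rw [hx']
    exact hS hx hy (by linarith) hα0 (by ring)
  -- x' - x = α • (y - x)
  have hx'sub : x' - x = α • (y - x) := by
    rw [hx']
    rw [smul_sub, sub_smul, one_smul]
    abel
  -- Hölder bound at x'
  have hinner : (inner ℝ (g x) (x' - x) : ℝ) = α * I := by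
    rw [hx'sub, real_inner_smul_right]
  have hsum : ∑ i, |(x' - x) i| ^ p = α ^ p * N := by
    rw [hN, Finset.mul_sum]
    refine Finset.sum_congr rfl fun i _ => ?_
    rw [hx'sub]
    rw [PiLp.smul_apply, smul_eq_mul, abs_mul, abs_of_nonneg hα0,
      Real.mul_rpow hα0 (abs_nonneg _)]
  have hfx' : f x' ≤ f x + α * I + ρ / 2 * (α ^ p * N) := by
    have := hHolder x hx x' hx'S
    rwa [hinner, hsum] at this
  have hrx' : r x' ≤ (1 - α) * r x + α * r y := by
    have := hr.2 (Set.mem_univ x) (Set.mem_univ y) (by linarith : (0:ℝ) ≤ 1 - α) hα0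
      (by ring : (1 - α) + α = 1)
    simpa [hx', smul_eq_mul] using this
  have hq : f x' + r x' ≤ f x + (t * I + t ^ p * (ρ / 2) * N + (1 - t) * r x + t * r y) := by
    have h1 := hαmin t ⟨ht0.le, ht1⟩
    have h2 : f x' + r x' ≤ f x + (α * I + α ^ p * (ρ / 2) * N + (1 - α) * r x + α * r y) := by
      linarith [hfx', hrx']
    linarith
  -- bound t^p (ρ/2) N ≤ t ε / 2
  have hbound : t ^ p * (ρ / 2) * N ≤ t * (ε / 2) := by
    rw [htp]
    have h3 : t * b * (ρ / 2) * N ≤ t * b * (ρ / 2) * (D ^ p) := by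
      apply mul_le_mul_of_nonneg_left hNle
      positivity
    have h4 : t * b * (ρ / 2) * (D ^ p) = t * (ε / 2) := by
      rw [hb]
      field_simp
    linarith
  -- conclude
  have hgain : t * ((-I + r x - r y) - ε / 2) ≤ (f x + r x) - (f x' + r x') := by
    linarith [hq, hbound]
  have hcoef : (ε / (D ^ p * ρ)) ^ (-(1 / (p - 1))) = t⁻¹ := by
    rw [← hb, ht, ← Real.rpow_neg hbpos.le]
  rw [hcoef]
  have h5 : (-I + r x - r y) - ε / 2 ≤ t⁻¹ * ((f x + r x) - (f x' + r x')) := by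
    rw [inv_mul_eq_div]
    exact (le_div_iff₀' ht0).2 hgain
  linarith
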